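/- In the T-case setup, the sum t_{({a},{b,c,d})} + t_{({a,b},{c,d})} is even and the sum t_{({d},{a,b,c})} + t_{({a,b},{c,d})} is even; consequently t_{({a},{b,c,d})} + t_{({d},{a,b,c})} ≡ 0 (mod 2). -/

import Mathlib

namespace C2

open SimpleGraph
open scoped symmDiff

variable {V : Type*}

/-- `ψ` is the edge set of a spanning tree of `H`. -/
def IsSpanningTree (H : SimpleGraph V) (ψ : Set (Sym2 V)) : Prop :=
  ψ ⊆ H.edgeSet ∧ (fromEdgeSet ψ).Connected ∧ (fromEdgeSet ψ).IsAcyclic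

/-- `φ` is a spanning 2-forest of `H` compatible with `(P₁, P₂)`. -/
def IsSpanning2Forest (H : SimpleGraph V) (P₁ P₂ : Set V) (φ : Set (Sym2 V)) : Prop :=
  φ ⊆ H.edgeSet ∧ (fromEdgeSet φ).IsAcyclic ∧
    ∃ C₁ C₂ : (fromEdgeSet φ).ConnectedComponent, C₁ ≠ C₂ ∧
      (∀ C : (fromEdgeSet φ).ConnectedComponent, C = C₁ ∨ C = C₂) ∧
      (∀ u ∈ P₁, (fromEdgeSet φ).connectedComponentMk u = C₁) ∧
      (∀ u ∈ P₂, (fromEdgeSet φ).connectedComponentMk u = C₂)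

/-- `(ψ, φ)` is an admissible pair of `H` for `(P₁, P₂)`. -/
def AdmissiblePair (H : SimpleGraph V) (P₁ P₂ : Set V) (ψ φ : Set (Sym2 V)) : Prop :=
  Disjoint ψ φ ∧ ψ ∪ φ = H.edgeSet ∧ IsSpanningTree H ψ ∧ IsSpanning2Forest H P₁ P₂ φ

/-- The number of admissible pairs of `H` for `(P₁, P₂)`. -/
noncomputable def admissibleCount (H : SimpleGraph V) (P₁ P₂ : Set V) : ℕ :=
  Set.ncard {pr : Set (Sym2 V) × Set (Sym2 V) | AdmissiblePair H P₁ P₂ pr.1 pr.2}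

/-- The Kirchhoff polynomial `Ψ_G = Σ_T Π_{e ∉ T} x_e`. -/
noncomputable def kirchhoff (G : SimpleGraph V) : MvPolynomial G.edgeSet ℤ :=
  ∑ᶠ T ∈ {T : Set (Sym2 V) | IsSpanningTree G T},
    ∏ᶠ e ∈ {e : G.edgeSet | (e : Sym2 V) ∉ T}, MvPolynomial.X e

/-- `[Ψ_G]₂`, the number of points `x ∈ 𝔽₂^{E(G)}` with `Ψ_G(x) = 0`. -/
noncomputable def pointCount2 (G : SimpleGraph V) : ℕ :=
  Set.ncard {x : G.edgeSet → ZMod 2 |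
    MvPolynomial.eval₂ (Int.castRingHom (ZMod 2)) x (kirchhoff G) = 0}

theorem mem_compl_pair {x v w : V} (h1 : x ≠ v) (h2 : x ≠ w) :
    x ∈ ({v, w}ᶜ : Set V) := by
  simp [h1, h2]

section Auxiliary

variable {W : Type*}

/-- If the only edge of `s` at `u` is `s(u,x)`, walks between non-`u` vertices avoid it. -/
lemma reachable_avoid_aux {s : Set (Sym2 W)} {u x : W} (hxu : x ≠ u)
    (hdeg : ∀ e ∈ s, u ∈ e → e = s(u, x)) :
    ∀ (n : ℕ) ⦃p q : W⦄, p ≠ u → q ≠ u → ∀ (w : (fromEdgeSet s).Walk p q), w.length ≤ n →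
      (fromEdgeSet (s \ {s(u, x)})).Reachable p q := by
  intro n
  induction n with
  | zero =>
    intro p q hp hq w hl
    cases w with
    | nil => exact Reachable.refl _
    | cons h w' => simp [Walk.length_cons] at hl
  | succ n ih =>
    intro p q hp hq w hl
    cases w with
    | nil => exact Reachable.refl _
    | @cons _ r _ h w' =>
      rw [fromEdgeSet_adj] at h
      by_cases hr : r = u
      · subst hr
        have hpx : p = x := by
          have h2 := hdeg _ h.1 (Sym2.mem_mk_right _ _)
          rw [Sym2.eq_iff] at h2
          tauto
        cases w' with
        | nil => exact absurd rfl hq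
        | @cons _ r2 _ h2 w'' =>
          rw [fromEdgeSet_adj] at h2
          have hr2 : r2 = x := by
            have h3 := hdeg _ h2.1 (Sym2.mem_mk_left _ _)
            rw [Sym2.eq_iff] at h3
            tauto
          subst hpx
          subst hr2
          exact ih hxu hq w'' (by simp [Walk.length_cons] at hl ⊢; omega)
      · have hne : s(p, r) ≠ s(u, x) := by
          intro he
          have hu : u ∈ s(p, r) := he ▸ Sym2.mem_mk_left u x
          rw [Sym2.mem_iff] at hu
          rcases hu with h' | h'
          · exact hp h'.symm
          · exact hr h'.symm
        have hadj : (fromEdgeSet (s \ {s(u, x)})).Adj p r := by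
          rw [fromEdgeSet_adj]
          exact ⟨⟨h.1, by simpa using hne⟩, h.2⟩
        exact hadj.reachable.trans (ih hr hq w' (by simp [Walk.length_cons] at hl ⊢; omega))

lemma reachable_avoid {s : Set (Sym2 W)} {u x : W} (hxu : x ≠ u)
    (hdeg : ∀ e ∈ s, u ∈ e → e = s(u, x)) {p q : W} (hp : p ≠ u) (hq : q ≠ u)
    (h : (fromEdgeSet s).Reachable p q) :
    (fromEdgeSet (s \ {s(u, x)})).Reachable p q :=
  h.elim fun w => reachable_avoid_aux hxu hdeg w.length hp hq w le_rfl

/-- If no edge of `s` contains `u`, then from `u` only `u` itself is reachable. -/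
lemma eq_of_isolated {s : Set (Sym2 W)} {u : W} (hdeg : ∀ e ∈ s, u ∉ e) {q : W}
    (h : (fromEdgeSet s).Reachable u q) : q = u := by
  obtain ⟨w⟩ := h
  cases w with
  | nil => rfl
  | cons h' w' =>
    rw [fromEdgeSet_adj] at h'
    exact absurd (Sym2.mem_mk_left _ _) (hdeg _ h'.1)

lemma acyclic_anti {s t : Set (Sym2 W)} (hst : s ⊆ t)
    (ht : (fromEdgeSet t).IsAcyclic) : (fromEdgeSet s).IsAcyclic := by
  intro v p hp
  have hE : ∀ e ∈ p.edges, e ∈ (fromEdgeSet t).edgeSet := by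
    intro e he
    have h1 := p.edges_subset_edgeSet he
    rw [edgeSet_fromEdgeSet] at h1 ⊢
    exact ⟨hst h1.1, h1.2⟩
  exact ht (p.transfer _ hE) (hp.transfer hE)

/-- If the only edge of `s` at `u` is `s(u,x)` and removing it leaves an acyclic graph,
then `fromEdgeSet s` is acyclic. -/
lemma acyclic_of_single_edge {s : Set (Sym2 W)} {u x : W}
    (hdeg : ∀ e ∈ s, u ∈ e → e = s(u, x))
    (hac : (fromEdgeSet (s \ {s(u, x)})).IsAcyclic) :
    (fromEdgeSet s).IsAcyclic := by
  classical
  intro v p hp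
  by_cases hu : u ∈ p.support
  · have hq := hp.rotate hu
    generalize p.rotate u hu = q at hq
    cases q with
    | nil => simp [Walk.isCycle_def] at hq
    | @cons _ r _ h1 q' =>
      have h1' := h1
      rw [fromEdgeSet_adj] at h1'
      have he1 : s(u, r) = s(u, x) := hdeg _ h1'.1 (Sym2.mem_mk_left _ _)
      have hru : r ≠ u := h1.ne'
      generalize hrev : q'.reverse = w2
      cases w2 with
      | nil => exact absurd rfl hru
      | @cons _ r2 _ h2 q'' =>
        have h2' := h2
        rw [fromEdgeSet_adj] at h2'
        have he2 : s(u, r2) = s(u, x) := hdeg _ h2'.1 (Sym2.mem_mk_left _ _)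
        have hmem : s(u, r2) ∈ q'.edges := by
          have : s(u, r2) ∈ q'.reverse.edges := by
            rw [hrev, Walk.edges_cons]; exact List.mem_cons_self
          rwa [Walk.edges_reverse, List.mem_reverse] at this
        rw [Walk.cons_isCycle_iff] at hq
        exact hq.2 (by rwa [he1, ← he2])
  · have hE : ∀ e ∈ p.edges, e ∈ (fromEdgeSet (s \ {s(u, x)})).edgeSet := by
      intro e he
      have h1 := p.edges_subset_edgeSet he
      rw [edgeSet_fromEdgeSet] at h1 ⊢
      refine ⟨⟨h1.1, ?_⟩, h1.2⟩
      intro hee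
      rw [Set.mem_singleton_iff] at hee
      subst hee
      exact hu (p.fst_mem_support_of_mem_edges he)
    exact hac (p.transfer _ hE) (hp.transfer hE)

lemma even_card_of_involution {α : Type*} [DecidableEq α] :
    ∀ (s : Finset α), ∀ (g : α → α), (∀ a ∈ s, g a ∈ s) → (∀ a ∈ s, g (g a) = a) →
      (∀ a ∈ s, g a ≠ a) → Even s.card := by
  intro s
  induction s using Finset.strongInduction with
  | _ s ih =>
    intro g hmem hinv hne
    rcases s.eq_empty_or_nonempty with rfl | ⟨a, ha⟩
    · simp
    · have hga : g a ∈ s := hmem a ha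
      have hane : a ≠ g a := (hne a ha).symm
      set t := s \ {a, g a} with ht
      have hsub2 : ({a, g a} : Finset α) ⊆ s := by
        intro z hz
        rcases Finset.mem_insert.mp hz with rfl | hz
        · exact ha
        · rw [Finset.mem_singleton.mp hz]; exact hga
      have hssub : t ⊂ s := by
        refine Finset.sdiff_ssubset hsub2 ?_
        exact ⟨a, Finset.mem_insert_self _ _⟩
      have hcard : s.card = t.card + 2 := by
        have h2 : ({a, g a} : Finset α).card = 2 := Finset.card_pair hane
        have hle : 2 ≤ s.card := h2 ▸ Finset.card_le_card hsub2
        rw [ht, Finset.card_sdiff_of_subset hsub2, h2]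
        omega
      have hmemt : ∀ b ∈ t, b ∈ s ∧ b ≠ a ∧ b ≠ g a := by
        intro b hb
        rw [ht, Finset.mem_sdiff, Finset.mem_insert, Finset.mem_singleton] at hb
        tauto
      have hstep : ∀ b ∈ t, g b ∈ t := by
        intro b hb
        obtain ⟨hbs, hba, hbga⟩ := hmemt b hb
        rw [ht, Finset.mem_sdiff, Finset.mem_insert, Finset.mem_singleton]
        have hinvb := hinv b hbs
        refine ⟨hmem b hbs, ?_⟩
        rintro (h | h)
        · rw [h] at hinvb
          exact hbga hinvb.symm
        · rw [h, hinv a ha] at hinvb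
          exact hba hinvb.symm
      have hev := ih t hssub g hstep (fun b hb => hinv b (hmemt b hb).1)
        (fun b hb => hne b (hmemt b hb).1)
      obtain ⟨k, hk⟩ := hev
      exact ⟨k + 1, by omega⟩

lemma even_ncard_of_involution {α : Type*} {S : Set α} (hS : S.Finite) (g : α → α)
    (hmem : ∀ a ∈ S, g a ∈ S) (hinv : ∀ a ∈ S, g (g a) = a) (hne : ∀ a ∈ S, g a ≠ a) :
    Even S.ncard := by
  classical
  rw [Set.ncard_eq_toFinset_card _ hS]
  exact even_card_of_involution hS.toFinset g
    (fun a ha => (hS.mem_toFinset).mpr (hmem a (hS.mem_toFinset.mp ha)))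
    (fun a ha => hinv a (hS.mem_toFinset.mp ha))
    (fun a ha => hne a (hS.mem_toFinset.mp ha))

lemma symmDiff_pair_eq {s : Set (Sym2 W)} {a b : Sym2 W} (ha : a ∈ s) (hb : b ∉ s)
    (hab : a ≠ b) : s ∆ ({a, b} : Set (Sym2 W)) = s \ {a} ∪ {b} := by
  ext f
  simp only [Set.mem_symmDiff, Set.mem_union, Set.mem_diff, Set.mem_insert_iff,
    Set.mem_singleton_iff]
  by_cases hfa : f = a <;> by_cases hfb : f = b <;> subst_eqs <;> tauto

lemma admissibleCount_comm (H : SimpleGraph W) (P₁ P₂ : Set W) :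
    admissibleCount H P₁ P₂ = admissibleCount H P₂ P₁ := by
  unfold admissibleCount
  congr 1
  ext pr
  constructor <;>
  · rintro ⟨hd, hun, ht, hsub, hac, C₁, C₂, hne, hall, h1, h2⟩
    exact ⟨hd, hun, ht, hsub, hac, C₂, C₁, hne.symm, fun C => (hall C).symm, h2, h1⟩

lemma swap_admissible {T' : SimpleGraph W} {u x1 x2 p q r : W}
    (hx1u : x1 ≠ u) (hx2u : x2 ≠ u)
    (hee : s(u, x1) ≠ s(u, x2))
    (he2E : s(u, x2) ∈ T'.edgeSet)
    (hkey : ∀ e ∈ T'.edgeSet, u ∈ e → e = s(u, x1) ∨ e = s(u, x2))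
    (hpu : p ≠ u) (hqu : q ≠ u) (hru : r ≠ u)
    {ψ φ : Set (Sym2 W)}
    (hd : Disjoint ψ φ) (hun : ψ ∪ φ = T'.edgeSet)
    (hψ : IsSpanningTree T' ψ)
    (hφsub : φ ⊆ T'.edgeSet) (hφac : (fromEdgeSet φ).IsAcyclic)
    (hnr : ¬ (fromEdgeSet φ).Reachable p r)
    (hqp : (fromEdgeSet φ).Reachable q p)
    (htot : ∀ z, (fromEdgeSet φ).Reachable z p ∨ (fromEdgeSet φ).Reachable z r)
    (he1ψ : s(u, x1) ∈ ψ) (he2φ : s(u, x2) ∈ φ) :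
    AdmissiblePair T' {p, q, u} {r} (ψ \ {s(u, x1)} ∪ {s(u, x2)}) (φ \ {s(u, x2)} ∪ {s(u, x1)})
    ∨ AdmissiblePair T' {p, q} {u, r} (ψ \ {s(u, x1)} ∪ {s(u, x2)}) (φ \ {s(u, x2)} ∪ {s(u, x1)}) := by
  set e1 := s(u, x1) with he1def
  set e2 := s(u, x2) with he2def
  have he2ψ : e2 ∉ ψ := fun h => (Set.disjoint_left.mp hd h) he2φ
  have he1φ : e1 ∉ φ := fun h => (Set.disjoint_left.mp hd he1ψ) h
  set ψ' := ψ \ {e1} ∪ {e2} with hψ'def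
  set φ' := φ \ {e2} ∪ {e1} with hφ'def
  have hψu : ∀ e ∈ ψ, u ∈ e → e = e1 := fun e he hu =>
    (hkey e (hψ.1 he) hu).resolve_right (fun h => he2ψ (h ▸ he))
  have hφu : ∀ e ∈ φ, u ∈ e → e = e2 := fun e he hu =>
    (hkey e (hφsub he) hu).resolve_left (fun h => he1φ (h ▸ he))
  have hψ'u : ∀ e ∈ ψ', u ∈ e → e = e2 := by
    rintro e (⟨he, hne⟩ | he) hu
    · exact absurd (hψu e he hu) (by simpa using hne)
    · simpa using he
  have hφ'u : ∀ e ∈ φ', u ∈ e → e = e1 := by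
    rintro e (⟨he, hne⟩ | he) hu
    · exact absurd (hφu e he hu) (by simpa using hne)
    · simpa using he
  have hψ'd : ψ' \ {e2} = ψ \ {e1} := by
    ext f
    by_cases hf : f = e2 <;> simp [hψ'def, hf, he2ψ]
  have hφ'd : φ' \ {e1} = φ \ {e2} := by
    ext f
    by_cases hf : f = e1 <;> simp [hφ'def, hf, he1φ]
  have hψsub' : ψ' ⊆ T'.edgeSet := by
    rintro f (⟨hf, _⟩ | hf)
    · exact hψ.1 hf
    · simpa [Set.mem_singleton_iff.mp hf] using he2E
  have hψcon := hψ.2.1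
  have hkeyreach : ∀ z z', z ≠ u → z' ≠ u → (fromEdgeSet ψ').Reachable z z' := by
    intro z z' hz hz'
    have h0 : (fromEdgeSet ψ).Reachable z z' := hψcon.preconnected z z'
    have h1 := reachable_avoid hx1u hψu hz hz' h0
    exact h1.mono (fromEdgeSet_mono Set.subset_union_left)
  have hadj2 : (fromEdgeSet ψ').Adj u x2 := (fromEdgeSet_adj _).mpr ⟨Or.inr rfl, hx2u.symm⟩
  have hψ'conn : (fromEdgeSet ψ').Connected := by
    rw [connected_iff]
    refine ⟨fun z z' => ?_, hψcon.nonempty⟩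
    by_cases hz : z = u <;> by_cases hz' : z' = u
    · rw [hz, hz']
    · rw [hz]; exact hadj2.reachable.trans (hkeyreach x2 z' hx2u hz')
    · rw [hz']; exact (hkeyreach z x2 hz hx2u).trans hadj2.symm.reachable
    · exact hkeyreach z z' hz hz'
  have hψ'ac : (fromEdgeSet ψ').IsAcyclic := by
    apply acyclic_of_single_edge hψ'u
    rw [← he2def, hψ'd]
    exact acyclic_anti Set.diff_subset hψ.2.2
  have hφ'sub : φ' ⊆ T'.edgeSet := by
    rintro f (⟨hf, _⟩ | hf)
    · exact hφsub hf
    · simpa [Set.mem_singleton_iff.mp hf] using (hψ.1 he1ψ)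
  have hφ'ac : (fromEdgeSet φ').IsAcyclic := by
    apply acyclic_of_single_edge hφ'u
    rw [← he1def, hφ'd]
    exact acyclic_anti Set.diff_subset hφac
  have hiff : ∀ z z', z ≠ u → z' ≠ u →
      ((fromEdgeSet φ').Reachable z z' ↔ (fromEdgeSet φ).Reachable z z') := by
    intro z z' hz hz'
    constructor
    · intro h
      have h1 := reachable_avoid hx1u hφ'u hz hz' h
      rw [← he1def, hφ'd] at h1
      exact h1.mono (fromEdgeSet_mono Set.diff_subset)
    · intro h
      have h1 := reachable_avoid hx2u hφu hz hz' h
      exact h1.mono (fromEdgeSet_mono Set.subset_union_left)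
  have hadj1 : (fromEdgeSet φ').Adj u x1 := (fromEdgeSet_adj _).mpr ⟨Or.inr rfl, hx1u.symm⟩
  have hnr' : ¬ (fromEdgeSet φ').Reachable p r := fun h => hnr ((hiff p r hpu hru).mp h)
  have htot' : ∀ z, (fromEdgeSet φ').Reachable z p ∨ (fromEdgeSet φ').Reachable z r := by
    intro z
    by_cases hz : z = u
    · subst hz
      rcases htot x1 with h | h
      · exact Or.inl (hadj1.reachable.trans ((hiff x1 p hx1u hpu).mpr h))
      · exact Or.inr (hadj1.reachable.trans ((hiff x1 r hx1u hru).mpr h))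
    · rcases htot z with h | h
      · exact Or.inl ((hiff z p hz hpu).mpr h)
      · exact Or.inr ((hiff z r hz hru).mpr h)
  have hqp' : (fromEdgeSet φ').Reachable q p := (hiff q p hqu hpu).mpr hqp
  have hdisj' : Disjoint ψ' φ' := by
    rw [Set.disjoint_left]
    rintro f (⟨hf, hf1⟩ | hf)
    · rintro (⟨hf2, _⟩ | hf2)
      · exact (Set.disjoint_left.mp hd hf) hf2
      · exact hf1 (by simpa using hf2)
    · rw [Set.mem_singleton_iff] at hf
      subst hf
      rintro (⟨hf2, hf3⟩ | hf2)
      · simp at hf3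
      · rw [Set.mem_singleton_iff] at hf2
        exact hee hf2.symm
  have hun' : ψ' ∪ φ' = T'.edgeSet := by
    rw [← hun]
    ext f
    simp only [hψ'def, hφ'def, Set.mem_union, Set.mem_diff, Set.mem_singleton_iff]
    constructor
    · rintro ((⟨h, _⟩ | h) | (⟨h, _⟩ | h))
      · exact Or.inl h
      · exact Or.inr (h ▸ he2φ)
      · exact Or.inr h
      · exact Or.inl (h ▸ he1ψ)
    · intro h
      by_cases h1 : f = e1
      · exact Or.inr (Or.inr h1)
      · by_cases h2 : f = e2
        · exact Or.inl (Or.inr h2)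
        · tauto
  have htree' : IsSpanningTree T' ψ' := ⟨hψsub', hψ'conn, hψ'ac⟩
  by_cases hup : (fromEdgeSet φ').Reachable u p
  · left
    refine ⟨hdisj', hun', htree', hφ'sub, hφ'ac,
      (fromEdgeSet φ').connectedComponentMk p, (fromEdgeSet φ').connectedComponentMk r,
      fun h => hnr' (ConnectedComponent.eq.mp h), ?_, ?_, ?_⟩
    · intro Cc
      obtain ⟨z, rfl⟩ := Cc.exists_rep
      rcases htot' z with h | h
      · exact Or.inl (ConnectedComponent.eq.mpr h)
      · exact Or.inr (ConnectedComponent.eq.mpr h)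
    · intro z hz
      rcases hz with rfl | rfl | rfl
      · rfl
      · exact ConnectedComponent.eq.mpr hqp'
      · exact ConnectedComponent.eq.mpr hup
    · intro z hz
      rcases hz with rfl
      rfl
  · right
    have hur : (fromEdgeSet φ').Reachable u r := (htot' u).resolve_left hup
    refine ⟨hdisj', hun', htree', hφ'sub, hφ'ac,
      (fromEdgeSet φ').connectedComponentMk p, (fromEdgeSet φ').connectedComponentMk r,
      fun h => hnr' (ConnectedComponent.eq.mp h), ?_, ?_, ?_⟩
    · intro Cc
      obtain ⟨z, rfl⟩ := Cc.exists_rep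
      rcases htot' z with h | h
      · exact Or.inl (ConnectedComponent.eq.mpr h)
      · exact Or.inr (ConnectedComponent.eq.mpr h)
    · intro z hz
      rcases hz with rfl | rfl
      · rfl
      · exact ConnectedComponent.eq.mpr hqp'
    · intro z hz
      rcases hz with rfl | rfl
      · exact ConnectedComponent.eq.mpr hur
      · rfl

lemma even_main [Finite W] (T' : SimpleGraph W) (u x1 x2 p q r : W)
    (h1 : T'.Adj u x1) (h2 : T'.Adj u x2) (hx : x1 ≠ x2)
    (hdeg : ∀ z, T'.Adj u z → z = x1 ∨ z = x2)
    (hpu : p ≠ u) (hqu : q ≠ u) (hru : r ≠ u) :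
    Even (admissibleCount T' {p, q, u} {r} + admissibleCount T' {p, q} {u, r}) := by
  classical
  have hx1u : x1 ≠ u := h1.ne'
  have hx2u : x2 ≠ u := h2.ne'
  set e1 := s(u, x1) with he1def
  set e2 := s(u, x2) with he2def
  have hee : e1 ≠ e2 := by
    intro h
    rw [he1def, he2def, Sym2.eq_iff] at h
    rcases h with ⟨_, h⟩ | ⟨h, _⟩
    · exact hx h
    · exact hx2u h.symm
  have he1E : e1 ∈ T'.edgeSet := T'.mem_edgeSet.mpr h1
  have he2E : e2 ∈ T'.edgeSet := T'.mem_edgeSet.mpr h2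
  have hkey : ∀ e ∈ T'.edgeSet, u ∈ e → e = e1 ∨ e = e2 := by
    intro e he hue
    induction e with
    | _ y z =>
      rw [mem_edgeSet] at he
      rw [Sym2.mem_iff] at hue
      rcases hue with rfl | rfl
      · rcases hdeg z he with rfl | rfl
        · exact Or.inl rfl
        · exact Or.inr rfl
      · rcases hdeg y he.symm with rfl | rfl
        · exact Or.inl Sym2.eq_swap
        · exact Or.inr Sym2.eq_swap
  set S1 := {pr : Set (Sym2 W) × Set (Sym2 W) | AdmissiblePair T' {p, q, u} {r} pr.1 pr.2}
    with hS1def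
  set S2 := {pr : Set (Sym2 W) × Set (Sym2 W) | AdmissiblePair T' {p, q} {u, r} pr.1 pr.2}
    with hS2def
  have hfacts : ∀ pr : Set (Sym2 W) × Set (Sym2 W), pr ∈ S1 ∪ S2 →
      Disjoint pr.1 pr.2 ∧ pr.1 ∪ pr.2 = T'.edgeSet ∧ IsSpanningTree T' pr.1 ∧
      pr.2 ⊆ T'.edgeSet ∧ (fromEdgeSet pr.2).IsAcyclic ∧
      ¬ (fromEdgeSet pr.2).Reachable p r ∧ (fromEdgeSet pr.2).Reachable q p ∧
      (∀ z, (fromEdgeSet pr.2).Reachable z p ∨ (fromEdgeSet pr.2).Reachable z r) := by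
    rintro pr (hpr | hpr)
    · obtain ⟨hd, hun, htree, hsub, hac, C₁, C₂, hne12, hall, hP1, hP2⟩ := hpr
      have mkp := hP1 p (by simp)
      have mkq := hP1 q (by simp)
      have mkr := hP2 r (by simp)
      refine ⟨hd, hun, htree, hsub, hac, ?_, ?_, ?_⟩
      · intro h
        have h' := ConnectedComponent.eq.mpr h
        rw [mkp, mkr] at h'
        exact hne12 h'
      · exact ConnectedComponent.eq.mp (mkq.trans mkp.symm)
      · intro z
        rcases hall ((fromEdgeSet pr.2).connectedComponentMk z) with h | h
        · exact Or.inl (ConnectedComponent.eq.mp (h.trans mkp.symm))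
        · exact Or.inr (ConnectedComponent.eq.mp (h.trans mkr.symm))
    · obtain ⟨hd, hun, htree, hsub, hac, C₁, C₂, hne12, hall, hP1, hP2⟩ := hpr
      have mkp := hP1 p (by simp)
      have mkq := hP1 q (by simp)
      have mkr := hP2 r (by simp)
      refine ⟨hd, hun, htree, hsub, hac, ?_, ?_, ?_⟩
      · intro h
        have h' := ConnectedComponent.eq.mpr h
        rw [mkp, mkr] at h'
        exact hne12 h'
      · exact ConnectedComponent.eq.mp (mkq.trans mkp.symm)
      · intro z
        rcases hall ((fromEdgeSet pr.2).connectedComponentMk z) with h | h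
        · exact Or.inl (ConnectedComponent.eq.mp (h.trans mkp.symm))
        · exact Or.inr (ConnectedComponent.eq.mp (h.trans mkr.symm))
  have hone : ∀ pr : Set (Sym2 W) × Set (Sym2 W), pr ∈ S1 ∪ S2 →
      (e1 ∈ pr.1 ∧ e2 ∈ pr.2) ∨ (e2 ∈ pr.1 ∧ e1 ∈ pr.2) := by
    intro pr hpr
    obtain ⟨hd, hun, htree, hsub, hac, hnr, hqp, htot⟩ := hfacts pr hpr
    have h1m : e1 ∈ pr.1 ∪ pr.2 := hun ▸ he1E
    have h2m : e2 ∈ pr.1 ∪ pr.2 := hun ▸ he2E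
    rcases h1m with h1m | h1m <;> rcases h2m with h2m | h2m
    · exfalso
      have hiso : ∀ e ∈ pr.2, u ∉ e := by
        intro e he hue
        rcases hkey e (hsub he) hue with rfl | rfl
        · exact (Set.disjoint_left.mp hd h1m) he
        · exact (Set.disjoint_left.mp hd h2m) he
      rcases htot u with h | h
      · exact hpu (eq_of_isolated hiso h)
      · exact hru (eq_of_isolated hiso h)
    · exact Or.inl ⟨h1m, h2m⟩
    · exact Or.inr ⟨h2m, h1m⟩
    · exfalso
      have hiso : ∀ e ∈ pr.1, u ∉ e := by
        intro e he hue
        rcases hkey e (htree.1 he) hue with rfl | rfl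
        · exact (Set.disjoint_left.mp hd he) h1m
        · exact (Set.disjoint_left.mp hd he) h2m
      exact hpu (eq_of_isolated hiso (htree.2.1.preconnected u p))
  set E : Set (Sym2 W) := {e1, e2} with hEdef
  set g : Set (Sym2 W) × Set (Sym2 W) → Set (Sym2 W) × Set (Sym2 W) :=
    fun pr => (pr.1 ∆ E, pr.2 ∆ E) with hgdef
  have hginv : ∀ pr, g (g pr) = pr := by
    intro pr
    simp only [hgdef, symmDiff_symmDiff_cancel_right]
  have hmem : ∀ pr ∈ S1 ∪ S2, g pr ∈ S1 ∪ S2 := by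
    intro pr hpr
    obtain ⟨hd, hun, htree, hsub, hac, hnr, hqp, htot⟩ := hfacts pr hpr
    rcases hone pr hpr with ⟨h1ψ, h2φ⟩ | ⟨h2ψ, h1φ⟩
    · have hg1 : pr.1 ∆ E = pr.1 \ {e1} ∪ {e2} :=
        symmDiff_pair_eq h1ψ (fun h => (Set.disjoint_left.mp hd h) h2φ) hee
      have hg2 : pr.2 ∆ E = pr.2 \ {e2} ∪ {e1} := by
        rw [hEdef, Set.pair_comm]
        exact symmDiff_pair_eq h2φ (fun h => (Set.disjoint_left.mp hd h1ψ) h) hee.symm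
      have hsw := swap_admissible hx1u hx2u hee he2E hkey hpu hqu hru hd hun htree hsub hac
        hnr hqp htot h1ψ h2φ
      rcases hsw with hsw | hsw
      · exact Or.inl (by simp only [hgdef, hS1def, Set.mem_setOf_eq, hg1, hg2]; exact hsw)
      · exact Or.inr (by simp only [hgdef, hS2def, Set.mem_setOf_eq, hg1, hg2]; exact hsw)
    · have hg1 : pr.1 ∆ E = pr.1 \ {e2} ∪ {e1} := by
        rw [hEdef, Set.pair_comm]
        exact symmDiff_pair_eq h2ψ (fun h => (Set.disjoint_left.mp hd h) h1φ) hee.symm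
      have hg2 : pr.2 ∆ E = pr.2 \ {e1} ∪ {e2} :=
        symmDiff_pair_eq h1φ (fun h => (Set.disjoint_left.mp hd h2ψ) h) hee
      have hkey' : ∀ e ∈ T'.edgeSet, u ∈ e → e = e2 ∨ e = e1 :=
        fun e he hu => (hkey e he hu).symm
      have hsw := swap_admissible hx2u hx1u hee.symm he1E hkey' hpu hqu hru hd hun htree hsub
        hac hnr hqp htot h2ψ h1φ
      rcases hsw with hsw | hsw
      · exact Or.inl (by simp only [hgdef, hS1def, Set.mem_setOf_eq, hg1, hg2]; exact hsw)
      · exact Or.inr (by simp only [hgdef, hS2def, Set.mem_setOf_eq, hg1, hg2]; exact hsw)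
  have hgne : ∀ pr ∈ S1 ∪ S2, g pr ≠ pr := by
    intro pr hpr heq
    have h1' : pr.1 ∆ E = pr.1 := congrArg Prod.fst heq
    rcases hone pr hpr with ⟨h1ψ, _⟩ | ⟨h2ψ, _⟩
    · have hnot : e1 ∉ pr.1 ∆ E := by
        simp [Set.mem_symmDiff, hEdef, h1ψ]
      rw [h1'] at hnot
      exact hnot h1ψ
    · have hnot : e2 ∉ pr.1 ∆ E := by
        simp [Set.mem_symmDiff, hEdef, h2ψ]
      rw [h1'] at hnot
      exact hnot h2ψ
  have hdisjS : Disjoint S1 S2 := by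
    rw [Set.disjoint_left]
    intro pr h1' h2'
    obtain ⟨_, _, _, _, _, C₁, C₂, hne12, _, hP1, hP2⟩ := h1'
    obtain ⟨_, _, _, _, _, C₁', C₂', hne12', _, hP1', hP2'⟩ := h2'
    have h1u := hP1 u (by simp)
    have h1p := hP1 p (by simp)
    have h2u := hP2' u (by simp)
    have h2p := hP1' p (by simp)
    have hup : (fromEdgeSet pr.2).Reachable p u := ConnectedComponent.eq.mp (h1p.trans h1u.symm)
    have : C₁' = C₂' := h2p.symm.trans ((ConnectedComponent.eq.mpr hup).trans h2u)
    exact hne12' this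
  have hfin1 : S1.Finite := Set.toFinite _
  have hfin2 : S2.Finite := Set.toFinite _
  have hcount : admissibleCount T' {p, q, u} {r} + admissibleCount T' {p, q} {u, r}
      = (S1 ∪ S2).ncard := by
    rw [Set.ncard_union_eq hdisjS hfin1 hfin2]
    rfl
  rw [hcount]
  exact even_ncard_of_involution (hfin1.union hfin2) g hmem (fun a _ => hginv a) hgne

end Auxiliary

lemma exists_two_nbrs {V : Type*} [Fintype V] (G : SimpleGraph V)
    (hreg : ∀ x : V, (G.neighborSet x).ncard = 4) {v w z : V}
    (hvw : v ≠ w) (hzv : G.Adj z v) (hzw : G.Adj z w) :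
    ∃ x y : V, x ≠ y ∧ x ≠ v ∧ x ≠ w ∧ y ≠ v ∧ y ≠ w ∧ G.Adj z x ∧ G.Adj z y ∧
      (∀ t : V, G.Adj z t → t ≠ v → t ≠ w → t = x ∨ t = y) := by
  have hsub : ({v, w} : Set V) ⊆ G.neighborSet z := by
    intro t ht
    rcases ht with rfl | ht
    · exact hzv
    · rw [Set.mem_singleton_iff] at ht
      subst ht
      exact hzw
  have hdiff : (G.neighborSet z \ {v, w}).ncard = 2 := by
    rw [Set.ncard_diff hsub (Set.toFinite _), hreg z, Set.ncard_pair hvw]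
  obtain ⟨x, y, hxy, hset⟩ := Set.ncard_eq_two.mp hdiff
  have hx : x ∈ G.neighborSet z \ ({v, w} : Set V) := by rw [hset]; exact Set.mem_insert _ _
  have hy : y ∈ G.neighborSet z \ ({v, w} : Set V) := by
    rw [hset]; exact Set.mem_insert_of_mem _ rfl
  have hx2 : x ≠ v ∧ x ≠ w := by
    have := hx.2
    simpa using this
  have hy2 : y ≠ v ∧ y ≠ w := by
    have := hy.2
    simpa using this
  refine ⟨x, y, hxy, hx2.1, hx2.2, hy2.1, hy2.2, hx.1, hy.1, ?_⟩
  intro t hzt htv htw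
  have ht : t ∈ G.neighborSet z \ ({v, w} : Set V) := ⟨hzt, by simp [htv, htw]⟩
  rw [hset] at ht
  rcases ht with rfl | ht
  · exact Or.inl rfl
  · exact Or.inr (Set.mem_singleton_iff.mp ht)

/-- T-case involutions: in the T-case setup,
`t_{({a},{b,c,d})} + t_{({a,b},{c,d})}` is even, `t_{({d},{a,b,c})} + t_{({a,b},{c,d})}`
is even, and consequently `t_{({a},{b,c,d})} + t_{({d},{a,b,c})} ≡ 0 (mod 2)`. -/
theorem tcase_parity {V : Type*} [Fintype V]
    (G : SimpleGraph V) (hconn : G.Connected)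
    (hreg : ∀ x : V, (G.neighborSet x).ncard = 4)
    (v w a b c d : V) (hvw : G.Adj v w)
    (hab : a ≠ b) (hac : a ≠ c) (had : a ≠ d) (hbc : b ≠ c) (hbd : b ≠ d) (hcd : c ≠ d)
    (hav : a ≠ v) (haw : a ≠ w) (hbv : b ≠ v) (hbw : b ≠ w)
    (hcv : c ≠ v) (hcw : c ≠ w) (hdv : d ≠ v) (hdw : d ≠ w)
    (hNw : G.neighborSet w = {a, b, c, v}) (hNv : G.neighborSet v = {b, c, d, w}) :
    let T := G.induce ({v, w}ᶜ : Set V)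
    let A : ↥({v, w}ᶜ : Set V) := ⟨a, mem_compl_pair hav haw⟩
    let B : ↥({v, w}ᶜ : Set V) := ⟨b, mem_compl_pair hbv hbw⟩
    let C : ↥({v, w}ᶜ : Set V) := ⟨c, mem_compl_pair hcv hcw⟩
    let D : ↥({v, w}ᶜ : Set V) := ⟨d, mem_compl_pair hdv hdw⟩
    Even (admissibleCount T {A} {B, C, D} + admissibleCount T {A, B} {C, D}) ∧
    Even (admissibleCount T {D} {A, B, C} + admissibleCount T {A, B} {C, D}) ∧
    Even (admissibleCount T {A} {B, C, D} + admissibleCount T {D} {A, B, C}) := by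
  intro T A B C D
  have hvw' : v ≠ w := hvw.ne
  have hbvadj : G.Adj b v := ((G.mem_neighborSet v b).mp (by rw [hNv]; simp)).symm
  have hbwadj : G.Adj b w := ((G.mem_neighborSet w b).mp (by rw [hNw]; simp)).symm
  have hcvadj : G.Adj c v := ((G.mem_neighborSet v c).mp (by rw [hNv]; simp)).symm
  have hcwadj : G.Adj c w := ((G.mem_neighborSet w c).mp (by rw [hNw]; simp)).symm
  obtain ⟨x, y, hxy, hxv, hxw, hyv, hyw, hbx, hby, hbdeg⟩ :=
    exists_two_nbrs G hreg hvw' hbvadj hbwadj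
  obtain ⟨x', y', hxy', hxv', hxw', hyv', hyw', hcx, hcy, hcdeg⟩ :=
    exists_two_nbrs G hreg hvw' hcvadj hcwadj
  set X : ↥({v, w}ᶜ : Set V) := ⟨x, mem_compl_pair hxv hxw⟩ with hXdef
  set Y : ↥({v, w}ᶜ : Set V) := ⟨y, mem_compl_pair hyv hyw⟩ with hYdef
  set X' : ↥({v, w}ᶜ : Set V) := ⟨x', mem_compl_pair hxv' hxw'⟩ with hX'def
  set Y' : ↥({v, w}ᶜ : Set V) := ⟨y', mem_compl_pair hyv' hyw'⟩ with hY'def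
  have hTadj : ∀ (z t : ↥({v, w}ᶜ : Set V)), T.Adj z t ↔ G.Adj z.1 t.1 := fun z t => Iff.rfl
  have hadjBX : T.Adj B X := (hTadj B X).mpr hbx
  have hadjBY : T.Adj B Y := (hTadj B Y).mpr hby
  have hadjCX : T.Adj C X' := (hTadj C X').mpr hcx
  have hadjCY : T.Adj C Y' := (hTadj C Y').mpr hcy
  have hXY : X ≠ Y := fun h => hxy (congrArg Subtype.val h)
  have hXY' : X' ≠ Y' := fun h => hxy' (congrArg Subtype.val h)
  have hdegB : ∀ z, T.Adj B z → z = X ∨ z = Y := by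
    intro z hz
    have hz' : G.Adj b z.1 := (hTadj B z).mp hz
    have hzc : z.1 ≠ v ∧ z.1 ≠ w := by
      have h := z.2
      simp only [Set.mem_compl_iff, Set.mem_insert_iff, Set.mem_singleton_iff, not_or] at h
      exact h
    rcases hbdeg z.1 hz' hzc.1 hzc.2 with h | h
    · exact Or.inl (Subtype.ext h)
    · exact Or.inr (Subtype.ext h)
  have hdegC : ∀ z, T.Adj C z → z = X' ∨ z = Y' := by
    intro z hz
    have hz' : G.Adj c z.1 := (hTadj C z).mp hz
    have hzc : z.1 ≠ v ∧ z.1 ≠ w := by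
      have h := z.2
      simp only [Set.mem_compl_iff, Set.mem_insert_iff, Set.mem_singleton_iff, not_or] at h
      exact h
    rcases hcdeg z.1 hz' hzc.1 hzc.2 with h | h
    · exact Or.inl (Subtype.ext h)
    · exact Or.inr (Subtype.ext h)
  have hAB : A ≠ B := fun h => hab (congrArg Subtype.val h)
  have hCB : C ≠ B := fun h => hbc (congrArg Subtype.val h).symm
  have hDB : D ≠ B := fun h => hbd (congrArg Subtype.val h).symm
  have hAC : A ≠ C := fun h => hac (congrArg Subtype.val h)
  have hBC : B ≠ C := fun h => hbc (congrArg Subtype.val h)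
  have hDC : D ≠ C := fun h => hcd (congrArg Subtype.val h).symm
  have hs1 := even_main T B X Y C D A hadjBX hadjBY hXY hdegB hCB hDB hAB
  have hs2 := even_main T C X' Y' A B D hadjCX hadjCY hXY' hdegC hAC hBC hDC
  rw [show ({C, D, B} : Set ↥({v, w}ᶜ : Set V)) = {B, C, D} by ext z; simp; tauto,
    Set.pair_comm B A, admissibleCount_comm T {B, C, D} {A},
    admissibleCount_comm T {C, D} {A, B}] at hs1
  rw [admissibleCount_comm T {A, B, C} {D}] at hs2
  refine ⟨hs1, hs2, ?_⟩
  obtain ⟨k1, hk1⟩ := hs1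
  obtain ⟨k2, hk2⟩ := hs2
  exact ⟨k1 + k2 - admissibleCount T {A, B} {C, D}, by omega⟩

end C2
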